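/- Every (m+1) x (m+1) matrix with entries in Q[xi_1, ..., xi_m], each of whose rows is an admissible row, has determinant equal to 0. -/

import Mathlib

open MvPolynomial

/-- `ρ_k = (-1)^k h_k`, with `ρ_k = 0` for `k < 0`. -/
noncomputable def SWrho (m : ℕ) (k : ℤ) : MvPolynomial (Fin m) ℚ :=
  if 0 ≤ k then C ((-1 : ℚ) ^ k) * hsymm (Fin m) ℚ k.toNat else 0

open Finset in
/-- Key combinatorial lemma: the sign-reversing involution. -/
private lemma SW_sum_pairs_eq_zero (m n : ℕ) (hn : 1 ≤ n) :
    ∑ p ∈ (univ ×ˢ univ : Finset (Finset (Fin m) × Sym (Fin m) n)).filter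
        (fun p => p.1.val ≤ (p.2 : Multiset (Fin m))),
      ((-1 : MvPolynomial (Fin m) ℚ) ^ p.1.card *
        (Multiset.map X (p.2 : Multiset (Fin m))).prod) = 0 := by
  classical
  have hne : ∀ p : Finset (Fin m) × Sym (Fin m) n,
      (p.2 : Multiset (Fin m)).toFinset.Nonempty := by
    intro p
    rw [Multiset.toFinset_nonempty]
    intro h0
    have h2 : Multiset.card (p.2 : Multiset (Fin m)) = n := p.2.2
    rw [h0, Multiset.card_zero] at h2
    omega
  have amem : ∀ p : Finset (Fin m) × Sym (Fin m) n,
      (p.2 : Multiset (Fin m)).toFinset.max' (hne p) ∈ (p.2 : Multiset (Fin m)) := by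
    intro p
    have := Finset.max'_mem _ (hne p)
    rwa [Multiset.mem_toFinset] at this
  refine Finset.sum_involution
    (fun p _ => (if (p.2 : Multiset (Fin m)).toFinset.max' (hne p) ∈ p.1
        then p.1.erase ((p.2 : Multiset (Fin m)).toFinset.max' (hne p))
        else insert ((p.2 : Multiset (Fin m)).toFinset.max' (hne p)) p.1, p.2))
    ?_ ?_ ?_ ?_
  · -- sum of weights is zero
    intro p hp
    set a := (p.2 : Multiset (Fin m)).toFinset.max' (hne p) with ha
    by_cases hmem : a ∈ p.1
    · simp only [hmem, if_true]
      have hc : (p.1.erase a).card + 1 = p.1.card := Finset.card_erase_add_one hmem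
      rw [← hc]
      ring
    · simp only [hmem, if_false]
      have hc : (insert a p.1).card = p.1.card + 1 := Finset.card_insert_of_notMem hmem
      rw [hc]
      ring
  · -- not a fixed point
    intro p hp _
    set a := (p.2 : Multiset (Fin m)).toFinset.max' (hne p) with ha
    by_cases hmem : a ∈ p.1
    · simp only [hmem, if_true]
      intro h
      have h1 : p.1.erase a = p.1 := congrArg Prod.fst h
      rw [← h1] at hmem
      exact Finset.notMem_erase a p.1 hmem
    · simp only [hmem, if_false]
      intro h
      have h1 : insert a p.1 = p.1 := congrArg Prod.fst h
      apply hmem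
      rw [← h1]
      exact Finset.mem_insert_self a p.1
  · -- membership preserved
    intro p hp
    set a := (p.2 : Multiset (Fin m)).toFinset.max' (hne p) with ha
    rw [Finset.mem_filter] at hp ⊢
    refine ⟨by simp, ?_⟩
    by_cases hmem : a ∈ p.1
    · simp only [hmem, if_true]
      calc (p.1.erase a).val = p.1.val.erase a := Finset.erase_val p.1 a
        _ ≤ p.1.val := Multiset.erase_le a p.1.val
        _ ≤ (p.2 : Multiset (Fin m)) := hp.2
    · simp only [hmem, if_false]
      rw [Finset.insert_val_of_notMem hmem, Multiset.le_iff_count]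
      intro b
      rw [Multiset.count_cons]
      by_cases hb : b = a
      · have h1 : Multiset.count a p.1.val = 0 := by
          rw [Multiset.count_eq_zero]
          simpa using hmem
        have h2 : 1 ≤ Multiset.count a (p.2 : Multiset (Fin m)) :=
          Multiset.one_le_count_iff_mem.mpr (amem p)
        simp only [hb, if_true, h1]
        omega
      · simp only [hb, if_false, add_zero]
        exact Multiset.le_iff_count.mp hp.2 b
  · -- involutive
    intro p hp
    set a := (p.2 : Multiset (Fin m)).toFinset.max' (hne p) with ha
    by_cases hmem : a ∈ p.1
    · simp only [hmem, if_true]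
      have h1 : a ∉ p.1.erase a := Finset.notMem_erase a p.1
      simp only [h1, if_false]
      rw [Finset.insert_erase hmem]
    · simp only [hmem, if_false]
      have h1 : a ∈ insert a p.1 := Finset.mem_insert_self a p.1
      simp only [h1, if_true]
      rw [Finset.erase_insert hmem]

open Finset in
/-- Inner sum: for a fixed finset `S`, summing the monomials of all `ν ⊇ S` of size `n`. -/
private lemma SW_inner_sum (m n : ℕ) (S : Finset (Fin m)) :
    ∑ ν ∈ (univ : Finset (Sym (Fin m) n)).filter
        (fun ν : Sym (Fin m) n => S.val ≤ (ν : Multiset (Fin m))),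
      (Multiset.map X (ν : Multiset (Fin m))).prod
    = if S.card ≤ n then
        (Multiset.map X S.val).prod * hsymm (Fin m) ℚ (n - S.card) else 0 := by
  classical
  by_cases hc : S.card ≤ n
  · rw [if_pos hc, hsymm, Finset.mul_sum]
    refine Finset.sum_bij'
      (fun ν hν => (⟨(ν : Multiset (Fin m)) - S.val, by
          rw [Finset.mem_filter] at hν
          have h1 : Multiset.card (ν : Multiset (Fin m)) = n := ν.2
          rw [Multiset.card_sub hν.2, h1]
          rfl⟩ : Sym (Fin m) (n - S.card)))
      (fun μ _ => (⟨(μ : Multiset (Fin m)) + S.val, by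
          have h1 : Multiset.card (μ : Multiset (Fin m)) = n - S.card := μ.2
          rw [Multiset.card_add, h1]
          show n - S.card + S.card = n
          omega⟩ : Sym (Fin m) n))
      (fun ν hν => Finset.mem_univ _)
      (fun μ hμ => by
        refine Finset.mem_filter.mpr ?_
        exact ⟨Finset.mem_univ _, Multiset.le_add_left _ _⟩)
      (fun ν hν => by
        rw [Finset.mem_filter] at hν
        apply Sym.coe_injective
        simp only [Sym.coe_mk]
        exact tsub_add_cancel_of_le hν.2)
      (fun μ hμ => by
        apply Sym.coe_injective
        simp only [Sym.coe_mk]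
        exact add_tsub_cancel_right _ _)
      (fun ν hν => by
        rw [Finset.mem_filter] at hν
        have hsplit : (ν : Multiset (Fin m)) = ((ν : Multiset (Fin m)) - S.val) + S.val :=
          (tsub_add_cancel_of_le hν.2).symm
        conv_lhs => rw [hsplit]
        rw [Multiset.map_add, Multiset.prod_add]
        simp only [Sym.coe_mk]
        ring)
  · rw [if_neg hc]
    apply Finset.sum_eq_zero
    intro ν hν
    rw [Finset.mem_filter] at hν
    exfalso
    apply hc
    have h1 := Multiset.card_le_card hν.2
    have h2 : Multiset.card (ν : Multiset (Fin m)) = n := ν.2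
    rw [h2] at h1
    exact h1

open Finset in
/-- The fundamental identity `∑ (-1)^i e_i h_{n-i} = 0` for `n ≥ 1`. -/
private lemma SW_eh_identity (m n : ℕ) (hn : 1 ≤ n) :
    ∑ i ∈ Finset.range (m + 1),
      (-1 : MvPolynomial (Fin m) ℚ) ^ i * esymm (Fin m) ℚ i *
        (if i ≤ n then hsymm (Fin m) ℚ (n - i) else 0) = 0 := by
  classical
  have h0 := SW_sum_pairs_eq_zero m n hn
  rw [Finset.sum_filter, Finset.sum_product] at h0
  have h1 : ∀ S : Finset (Fin m),
      (∑ ν : Sym (Fin m) n, if S.val ≤ (ν : Multiset (Fin m)) then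
        (-1 : MvPolynomial (Fin m) ℚ) ^ S.card * (Multiset.map X (ν : Multiset (Fin m))).prod
        else 0)
      = (-1 : MvPolynomial (Fin m) ℚ) ^ S.card *
        (if S.card ≤ n then (Multiset.map X S.val).prod * hsymm (Fin m) ℚ (n - S.card)
          else 0) := by
    intro S
    rw [← SW_inner_sum m n S, Finset.mul_sum, Finset.sum_filter]
  simp only [h1] at h0
  rw [← Finset.powerset_univ, Finset.sum_powerset, Finset.card_univ, Fintype.card_fin] at h0
  refine Eq.trans ?_ h0
  apply Finset.sum_congr rfl
  intro i _
  rw [esymm, Finset.mul_sum, Finset.sum_mul]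
  apply Finset.sum_congr rfl
  intro S hS
  rw [Finset.mem_powersetCard] at hS
  rw [hS.2, mul_ite, mul_ite, mul_zero, mul_zero]
  congr 1
  rw [Finset.prod_eq_multiset_prod]
  ring

/-- The identity in `SWrho` form: `∑_{i=0}^{m} ρ_{k-i} e_i = 0` for `k ≥ 1`. -/
private lemma SW_key (m : ℕ) (k : ℤ) (hk : 1 ≤ k) :
    ∑ i : Fin (m + 1), SWrho m (k - (i : ℕ)) * esymm (Fin m) ℚ (i : ℕ) = 0 := by
  classical
  obtain ⟨N, rfl⟩ : ∃ N : ℕ, k = (N : ℤ) := ⟨k.toNat, (Int.toNat_of_nonneg (by omega)).symm⟩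
  have hN : 1 ≤ N := by exact_mod_cast hk
  have hsign : ∀ i : ℕ, ((-1 : ℚ) ^ ((N : ℤ) - (i : ℤ))) = (-1 : ℚ) ^ N * (-1 : ℚ) ^ i := by
    intro i
    rw [zpow_sub₀ (by norm_num : (-1 : ℚ) ≠ 0), zpow_natCast, zpow_natCast,
      div_eq_mul_inv, ← inv_pow, inv_neg, inv_one]
  have hterm : ∀ i : ℕ, SWrho m ((N : ℤ) - (i : ℕ)) * esymm (Fin m) ℚ i
      = C ((-1 : ℚ) ^ N) * ((-1 : MvPolynomial (Fin m) ℚ) ^ i * esymm (Fin m) ℚ i *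
          (if i ≤ N then hsymm (Fin m) ℚ (N - i) else 0)) := by
    intro i
    simp only [SWrho]
    by_cases hi : i ≤ N
    · rw [if_pos (by omega : (0 : ℤ) ≤ (N : ℤ) - (i : ℕ)), if_pos hi]
      rw [Int.toNat_sub, hsign i]
      simp only [map_mul, map_pow, map_neg, map_one]
      ring
    · rw [if_neg (by omega : ¬ (0 : ℤ) ≤ (N : ℤ) - (i : ℕ)), if_neg hi]
      ring
  calc ∑ i : Fin (m + 1), SWrho m ((N : ℤ) - (i : ℕ)) * esymm (Fin m) ℚ (i : ℕ)
      = ∑ i ∈ Finset.range (m + 1), SWrho m ((N : ℤ) - (i : ℕ)) * esymm (Fin m) ℚ i :=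
        Fin.sum_univ_eq_sum_range (fun i => SWrho m ((N : ℤ) - (i : ℕ)) * esymm (Fin m) ℚ i) _
    _ = C ((-1 : ℚ) ^ N) * ∑ i ∈ Finset.range (m + 1),
          ((-1 : MvPolynomial (Fin m) ℚ) ^ i * esymm (Fin m) ℚ i *
            (if i ≤ N then hsymm (Fin m) ℚ (N - i) else 0)) := by
        rw [Finset.mul_sum]
        exact Finset.sum_congr rfl fun i _ => hterm i
    _ = 0 := by rw [SW_eh_identity m N hN, mul_zero]

theorem det_fundamental_matrix_eq_zero (m : ℕ) (hm : 1 ≤ m)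
    (M : Matrix (Fin (m + 1)) (Fin (m + 1)) (MvPolynomial (Fin m) ℚ))
    (hM : ∀ i, ∃ k : ℤ, 1 ≤ k ∧ ∀ j, M i j = SWrho m (k - m + (j : ℕ))) :
    M.det = 0 := by
  classical
  rw [← Matrix.exists_mulVec_eq_zero_iff]
  refine ⟨fun j => esymm (Fin m) ℚ (m - (j : ℕ)), ?_, ?_⟩
  · intro h
    have h1 := congrFun h (Fin.last m)
    simp only [Fin.val_last, Nat.sub_self, esymm_zero, Pi.zero_apply] at h1
    exact one_ne_zero h1
  · funext i
    obtain ⟨k, hk, hrow⟩ := hM i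
    show ∑ j, M i j * esymm (Fin m) ℚ (m - (j : ℕ)) = 0
    simp only [hrow]
    have hrev : ∑ j : Fin (m + 1), SWrho m (k - m + ((j : ℕ) : ℤ)) * esymm (Fin m) ℚ (m - (j : ℕ))
        = ∑ j : Fin (m + 1), SWrho m (k - (j : ℕ)) * esymm (Fin m) ℚ (j : ℕ) := by
      rw [← Equiv.sum_comp (Fin.revPerm : Equiv.Perm (Fin (m + 1)))
        (fun j => SWrho m (k - m + ((j : ℕ) : ℤ)) * esymm (Fin m) ℚ (m - (j : ℕ)))]
      apply Finset.sum_congr rfl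
      intro j _
      have hj : (j : ℕ) ≤ m := Fin.is_le j
      have hval : ((Fin.revPerm j : Fin (m + 1)) : ℕ) = m - (j : ℕ) := by
        rw [show (Fin.revPerm j : Fin (m + 1)) = j.rev from rfl, Fin.val_rev]
        omega
      rw [hval, Nat.cast_sub hj, Nat.sub_sub_self hj]
      have harg : k - (m : ℤ) + ((m : ℤ) - ((j : ℕ) : ℤ)) = k - (j : ℕ) := by ring
      rw [harg]
    rw [hrev]
    exact SW_key m k hk
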